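/- Let k be a field, R = k[a, b, c, d, e], R' = k[a, b, c, d] ⊆ R, let M₃ = R/((a − b)(e − b), (c − d)(e − d)), and let M₃' be the R'-submodule of M₃ generated by the classes of 1 and e. Set s = a − b − c + d ∈ R'. Then s acts on M₃' without zero-divisors: for every x ∈ M₃', if s·x = 0 then x = 0. -/

import Mathlib

open MvPolynomial Polynomial

section Aux

variable (k : Type*) [Field k]

/-- `s = a - b - c + d` is prime in `k[a,b,c,d]`. -/
lemma IIb_aux_prime_s : Prime (X 0 - X 1 - X 2 + X 3 : MvPolynomial (Fin 4) k) := by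
  set e := (MvPolynomial.finSuccEquiv k 3).toRingEquiv.toMulEquiv with he
  have key : e (X 0 - X 1 - X 2 + X 3) =
      Polynomial.X - Polynomial.C (X 0 + X 1 - X 2) := by
    show (MvPolynomial.finSuccEquiv k 3) (X 0 - X 1 - X 2 + X 3) = _
    rw [show (X 1 : MvPolynomial (Fin 4) k) = X (Fin.succ 0) from rfl,
        show (X 2 : MvPolynomial (Fin 4) k) = X (Fin.succ 1) from rfl,
        show (X 3 : MvPolynomial (Fin 4) k) = X (Fin.succ 2) from rfl]
    simp only [map_add, map_sub, finSuccEquiv_X_zero, finSuccEquiv_X_succ]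
    ring
  rw [← MulEquiv.prime_iff e, key]
  exact Polynomial.prime_X_sub_C _

variable {k}

lemma IIb_aux_not_dvd (t : MvPolynomial (Fin 4) k) (σ : Fin 4 → k)
    (h0 : MvPolynomial.eval σ (X 0 - X 1 - X 2 + X 3) = 0)
    (h1 : MvPolynomial.eval σ t ≠ 0) :
    ¬ (X 0 - X 1 - X 2 + X 3 : MvPolynomial (Fin 4) k) ∣ t := by
  rintro ⟨u, rfl⟩
  exact h1 (by rw [map_mul, h0, zero_mul])

lemma IIb_aux_ne_zero (t : MvPolynomial (Fin 4) k) (σ : Fin 4 → k)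
    (h1 : MvPolynomial.eval σ t ≠ 0) : t ≠ 0 := by
  rintro rfl; exact h1 (map_zero _)

end Aux

/-- In `R = k[a, b, c, d, e]`, realized as `(k[a, b, c, d])[e]`
(so `R' = k[a, b, c, d] = MvPolynomial (Fin 4) k` is the base ring,
`a = C (X 0)`, `b = C (X 1)`, `c = C (X 2)`, `d = C (X 3)`, `e = Polynomial.X`),
let `M₃ = R/((a − b)(e − b), (c − d)(e − d))` and let `M₃'` be the `R'`-submodule
generated by the classes of `1` and `e`.  Then `s = a − b − c + d ∈ R'` acts on `M₃'`
without zero-divisors: multiplication by `s` is injective on `M₃'`. -/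
theorem IIb_s_regular_on_M3' (k : Type*) [Field k] :
    ∀ I : Ideal (Polynomial (MvPolynomial (Fin 4) k)),
      I = Ideal.span {(Polynomial.C (X 0) - Polynomial.C (X 1)) *
            (Polynomial.X - Polynomial.C (X 1)),
          (Polynomial.C (X 2) - Polynomial.C (X 3)) *
            (Polynomial.X - Polynomial.C (X 3))} →
      ∀ x ∈ Submodule.span (MvPolynomial (Fin 4) k)
          {(1 : Polynomial (MvPolynomial (Fin 4) k) ⧸ I),
            Ideal.Quotient.mk I Polynomial.X},
        (X 0 - X 1 - X 2 + X 3 : MvPolynomial (Fin 4) k) • x = 0 → x = 0 := by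
  intro I hI x hx hsx
  set S := MvPolynomial (Fin 4) k
  set s : S := X 0 - X 1 - X 2 + X 3 with hs_def
  set a : S := X 0
  set b : S := X 1
  set c : S := X 2
  set d : S := X 3
  have hsmul : ∀ (r : S) (y : Polynomial S),
      r • Ideal.Quotient.mk I y = Ideal.Quotient.mk I (Polynomial.C r * y) := by
    intro r y
    have h : r • Ideal.Quotient.mk I y = Ideal.Quotient.mk I (r • y) := rfl
    rw [h, Polynomial.smul_eq_C_mul]
  obtain ⟨p, q, rfl⟩ := Submodule.mem_span_pair.mp hx
  have h1 : (1 : Polynomial S ⧸ I) = Ideal.Quotient.mk I 1 := (map_one _).symm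
  -- translate the hypothesis into an ideal membership
  rw [h1, hsmul, hsmul, ← RingHom.map_add (Ideal.Quotient.mk I), hsmul,
    Ideal.Quotient.eq_zero_iff_mem, hI] at hsx
  obtain ⟨f, g, hfg⟩ := Ideal.mem_span_pair.mp hsx
  -- evaluate at e = b
  have hb := congrArg (Polynomial.eval b) hfg
  simp only [Polynomial.eval_add, Polynomial.eval_mul, Polynomial.eval_sub, Polynomial.eval_C, Polynomial.eval_X, Polynomial.eval_one] at hb
  -- evaluate at e = d
  have hd := congrArg (Polynomial.eval d) hfg
  simp only [Polynomial.eval_add, Polynomial.eval_mul, Polynomial.eval_sub, Polynomial.eval_C, Polynomial.eval_X, Polynomial.eval_one] at hd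
  have hprime := IIb_aux_prime_s k
  have hs_ne : s ≠ 0 := hprime.ne_zero
  have hbd_ne : b - d ≠ 0 :=
    IIb_aux_ne_zero _ ![0, 1, 0, 0] (by simp [b, d])
  -- s divides g.eval b
  have hdvd_g : s ∣ Polynomial.eval b g := by
    have h : s ∣ (c - d) * ((b - d) * Polynomial.eval b g) :=
      ⟨p + q * b, by linear_combination hb⟩
    rcases hprime.2.2 _ _ h with h' | h'
    · exact absurd h' (IIb_aux_not_dvd _ ![1, 0, 1, 0] (by simp [s, hs_def, a, b, c, d])
        (by simp [c, d]))
    rcases hprime.2.2 _ _ h' with h'' | h''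
    · exact absurd h'' (IIb_aux_not_dvd _ ![1, 1, 0, 0] (by simp [s, hs_def, a, b, c, d])
        (by simp [b, d]))
    · exact h''
  have hdvd_f : s ∣ Polynomial.eval d f := by
    have h : s ∣ (a - b) * ((d - b) * Polynomial.eval d f) :=
      ⟨p + q * d, by linear_combination hd⟩
    rcases hprime.2.2 _ _ h with h' | h'
    · exact absurd h' (IIb_aux_not_dvd _ ![1, 0, 1, 0] (by simp [s, hs_def, a, b, c, d])
        (by simp [a, b]))
    rcases hprime.2.2 _ _ h' with h'' | h''
    · exact absurd h'' (IIb_aux_not_dvd _ ![0, 0, 1, 1] (by simp [s, hs_def, a, b, c, d])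
        (by simp [b, d]))
    · exact h''
  obtain ⟨g', hg'⟩ := hdvd_g
  obtain ⟨f', hf'⟩ := hdvd_f
  have e1 : p + q * b = (c - d) * (b - d) * g' :=
    mul_left_cancel₀ hs_ne (by linear_combination ((c-d)*(b-d)) * hg' - hb)
  have e2 : p + q * d = (a - b) * (d - b) * f' :=
    mul_left_cancel₀ hs_ne (by linear_combination ((a-b)*(d-b)) * hf' - hd)
  have hq : q = (a - b) * f' + (c - d) * g' :=
    mul_left_cancel₀ hbd_ne (by linear_combination e1 - e2)
  have hp : p = -((a - b) * b * f') - (c - d) * d * g' := by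
    linear_combination e1 - b * hq
  -- conclude
  rw [h1, hsmul, hsmul, ← RingHom.map_add (Ideal.Quotient.mk I), Ideal.Quotient.eq_zero_iff_mem, hI]
  refine Ideal.mem_span_pair.mpr ⟨Polynomial.C f', Polynomial.C g', ?_⟩
  rw [hp, hq]
  simp only [map_add, map_sub, map_mul, map_neg]
  ring
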